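/- Energy estimate for a perturbed scalar ODE: let λ > 0, p ≥ 1, T > 0, and let v, w be continuous on [0,T] with v absolutely continuous, v(0) = 0, and v'(t) + λ v(t) = λ w(t) for a.e. t. Then for all t ∈ [0,T]: |v(t)|^p + λ ∫₀ᵗ |v(τ)|^p dτ ≤ λ ∫₀ᵗ |w(τ)|^p dτ. In particular ‖v‖_{L^∞(0,T)} ≤ λ^{1/p} ‖w‖_{L^p(0,T)} and ‖v‖_{L^p(0,T)} ≤ ‖w‖_{L^p(0,T)}. -/

import Mathlib

open Real MeasureTheory intervalIntegral


lemma fubini_triangle (t : ℝ) (ht : 0 ≤ t) (A g : ℝ → ℝ) (hA : Continuous A)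
    (hg : IntegrableOn g (Set.Ioc 0 t)) :
    ∫ x in Set.Ioc 0 t, A x * ∫ y in Set.Ioc 0 x, g y =
      ∫ y in Set.Ioc 0 t, (∫ x in Set.Icc y t, A x) * g y := by
  set μ := volume.restrict (Set.Ioc (0:ℝ) t) with hμ
  obtain ⟨C, hC⟩ : ∃ C, ∀ x ∈ Set.Icc (0:ℝ) t, ‖A x‖ ≤ C :=
    isCompact_Icc.exists_bound_of_continuousOn hA.continuousOn
  have hC0 : (0:ℝ) ≤ C := (norm_nonneg (A 0)).trans (hC 0 ⟨le_refl 0, ht⟩)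
  set F : ℝ → ℝ → ℝ := fun x y => if y ≤ x then A x * g y else 0 with hF
  have hSmeas : MeasurableSet {q : ℝ × ℝ | q.2 ≤ q.1} :=
    measurableSet_le measurable_snd measurable_fst
  have huncurry : Function.uncurry F =
      Set.indicator {q : ℝ × ℝ | q.2 ≤ q.1} (fun q => A q.1 * g q.2) := by
    ext q
    by_cases h : q.2 ≤ q.1 <;>
      simp [hF, Function.uncurry, h, Set.indicator_of_mem, Set.indicator_of_notMem]
  have hgm : AEStronglyMeasurable (fun q : ℝ × ℝ => g q.2) (μ.prod μ) :=
    (hg.aemeasurable.comp_snd).aestronglyMeasurable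
  have hFmeas : AEStronglyMeasurable (Function.uncurry F) (μ.prod μ) := by
    rw [huncurry]
    exact (((hA.comp continuous_fst).aestronglyMeasurable).mul hgm).indicator hSmeas
  have haemem : ∀ᵐ q : ℝ × ℝ ∂(μ.prod μ), q ∈ Set.Ioc (0:ℝ) t ×ˢ Set.Ioc (0:ℝ) t := by
    rw [hμ, Measure.prod_restrict]
    exact ae_restrict_mem (measurableSet_Ioc.prod measurableSet_Ioc)
  have hFint : Integrable (Function.uncurry F) (μ.prod μ) := by
    have hbound : Integrable (fun q : ℝ × ℝ => C * |g q.2|) (μ.prod μ) :=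
      Integrable.mul_prod (integrable_const C) hg.norm
    refine hbound.mono' hFmeas ?_
    filter_upwards [haemem] with q hq
    have h1 : ‖A q.1‖ ≤ C := hC q.1 ⟨le_of_lt hq.1.1, hq.1.2⟩
    rw [huncurry]
    simp only [Set.indicator_apply, Set.mem_setOf_eq]
    split_ifs with h
    · calc ‖A q.1 * g q.2‖ = ‖A q.1‖ * ‖g q.2‖ := norm_mul _ _
        _ ≤ C * |g q.2| := mul_le_mul_of_nonneg_right h1 (norm_nonneg _)
    · simp only [norm_zero]
      exact mul_nonneg hC0 (abs_nonneg _)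
  have hswap : ∫ x, ∫ y, F x y ∂μ ∂μ = ∫ y, ∫ x, F x y ∂μ ∂μ :=
    integral_integral_swap hFint
  have hinner1 : ∀ x ∈ Set.Ioc (0:ℝ) t, ∫ y, F x y ∂μ = A x * ∫ y in Set.Ioc 0 x, g y := by
    intro x hx
    have : (fun y => F x y) = Set.indicator (Set.Iic x) (fun y => A x * g y) := by
      ext y; by_cases h : y ≤ x <;>
        simp [hF, h, Set.indicator_of_mem, Set.indicator_of_notMem, Set.mem_Iic]
    rw [this, MeasureTheory.integral_indicator measurableSet_Iic, hμ,
      Measure.restrict_restrict measurableSet_Iic]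
    have hset : Set.Iic x ∩ Set.Ioc 0 t = Set.Ioc 0 x := by
      ext y
      simp only [Set.mem_inter_iff, Set.mem_Iic, Set.mem_Ioc]
      exact ⟨fun ⟨h1, h2, h3⟩ => ⟨h2, h1⟩, fun ⟨h1, h2⟩ => ⟨h2, h1, h2.trans hx.2⟩⟩
    rw [hset, MeasureTheory.integral_const_mul]
  have hinner2 : ∀ y ∈ Set.Ioc (0:ℝ) t, ∫ x, F x y ∂μ = (∫ x in Set.Icc y t, A x) * g y := by
    intro y hy
    have : (fun x => F x y) = Set.indicator (Set.Ici y) (fun x => A x * g y) := by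
      ext x; by_cases h : y ≤ x <;>
        simp [hF, h, Set.indicator_of_mem, Set.indicator_of_notMem, Set.mem_Ici]
    rw [this, MeasureTheory.integral_indicator measurableSet_Ici, hμ,
      Measure.restrict_restrict measurableSet_Ici]
    have hset : Set.Ici y ∩ Set.Ioc 0 t = Set.Icc y t := by
      ext x
      simp only [Set.mem_inter_iff, Set.mem_Ici, Set.mem_Ioc, Set.mem_Icc]
      exact ⟨fun ⟨h1, h2, h3⟩ => ⟨h1, h3⟩, fun ⟨h1, h2⟩ => ⟨h1, hy.1.trans_le h1, h2⟩⟩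
    rw [hset, MeasureTheory.integral_mul_const]
  calc ∫ x in Set.Ioc 0 t, A x * ∫ y in Set.Ioc 0 x, g y
      = ∫ x, ∫ y, F x y ∂μ ∂μ :=
        (setIntegral_congr_fun measurableSet_Ioc fun x hx => (hinner1 x hx).symm)
    _ = ∫ y, ∫ x, F x y ∂μ ∂μ := hswap
    _ = ∫ y in Set.Ioc 0 t, (∫ x in Set.Icc y t, A x) * g y :=
        setIntegral_congr_fun measurableSet_Ioc fun y hy => hinner2 y hy

lemma expint (c d a b : ℝ) : ∫ x in a..b, c * exp (c * x + d) =
    exp (c * b + d) - exp (c * a + d) := by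
  have h : ∀ x ∈ Set.uIcc a b, HasDerivAt (fun τ => exp (c * τ + d))
      (c * exp (c * x + d)) x := by
    intro x _
    have : HasDerivAt (fun τ : ℝ => c * τ + d) c x := by
      simpa using ((hasDerivAt_id x).const_mul c).add_const d
    simpa [mul_comm] using this.exp
  exact integral_eq_sub_of_hasDerivAt h
    (Continuous.intervalIntegrable (by continuity) a b)

lemma jensen_step (lam p t : ℝ) (hlam : 0 < lam) (hp : 1 ≤ p) (ht : 0 ≤ t)
    (f : ℝ → ℝ) (hf : ContinuousOn f (Set.Icc 0 t)) (hfnn : ∀ x, 0 ≤ f x) :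
    (∫ τ in Set.Ioc 0 t, lam * exp (lam * (τ - t)) * f τ) ^ p ≤
      ∫ τ in Set.Ioc 0 t, lam * exp (lam * (τ - t)) * f τ ^ p := by
  set μ := volume.restrict (Set.Ioc (0:ℝ) t) with hμ
  set k : ℝ → ℝ := fun τ => lam * exp (lam * (τ - t)) with hk
  have hkpos : ∀ τ, 0 < k τ := fun τ => mul_pos hlam (exp_pos _)
  have hkcont : Continuous k := by continuity
  have hkle : ∀ τ ≤ t, k τ ≤ lam := by
    intro τ hτ
    have : exp (lam * (τ - t)) ≤ 1 := by
      rw [exp_le_one_iff]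
      exact mul_nonpos_of_nonneg_of_nonpos hlam.le (by linarith)
    calc k τ = lam * exp (lam * (τ - t)) := rfl
      _ ≤ lam * 1 := by gcongr
      _ = lam := mul_one lam
  have hmass : ∫ τ in Set.Ioc 0 t, k τ = 1 - exp (-(lam * t)) := by
    rw [← integral_of_le ht]
    have := expint lam (-(lam * t)) 0 t
    simp only [hk]
    rw [show (fun τ => lam * exp (lam * (τ - t))) = fun τ => lam * exp (lam * τ + -(lam * t))
      by ext τ; ring_nf]
    rw [this]; norm_num
  have hmass1 : ∫ τ in Set.Ioc 0 t, k τ ≤ 1 := by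
    rw [hmass]; have := exp_pos (-(lam * t)); linarith
  have hmass0 : 0 ≤ ∫ τ in Set.Ioc 0 t, k τ :=
    setIntegral_nonneg measurableSet_Ioc fun τ _ => (hkpos τ).le
  have hfm : AEStronglyMeasurable f μ :=
    (hf.mono Set.Ioc_subset_Icc_self).aestronglyMeasurable measurableSet_Ioc
  obtain ⟨C, hC⟩ : ∃ C, ∀ x ∈ Set.Icc (0:ℝ) t, ‖f x‖ ≤ C :=
    isCompact_Icc.exists_bound_of_continuousOn hf
  have hRHS0 : 0 ≤ ∫ τ in Set.Ioc 0 t, k τ * f τ ^ p :=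
    setIntegral_nonneg measurableSet_Ioc fun τ _ =>
      mul_nonneg (hkpos τ).le (rpow_nonneg (hfnn τ) p)
  have hp0 : (0:ℝ) < p := lt_of_lt_of_le one_pos hp
  rcases eq_or_lt_of_le hp with hp1 | hp1
  · simp only [← hp1, rpow_one]; exact le_rfl
  -- p > 1 case
  set q := Real.conjExponent p with hq
  have hpq : p.HolderConjugate q := Real.HolderConjugate.conjExponent hp1
  have hq0 : (0:ℝ) < q := hpq.symm.pos
  set φ : ℝ → ℝ := fun τ => k τ ^ (1/p) * f τ with hφ
  set ψ : ℝ → ℝ := fun τ => k τ ^ (1/q) with hψ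
  have hφm : AEStronglyMeasurable φ μ :=
    ((hkcont.rpow_const fun x => Or.inr (one_div_nonneg.mpr hp0.le)).aestronglyMeasurable).mul hfm
  have hψm : AEStronglyMeasurable ψ μ :=
    (hkcont.rpow_const fun x => Or.inr (one_div_nonneg.mpr hq0.le)).aestronglyMeasurable
  have hφbd : ∀ᵐ τ ∂μ, ‖φ τ‖ ≤ lam ^ (1/p) * C := by
    filter_upwards [ae_restrict_mem measurableSet_Ioc] with τ hτ
    rw [hφ, norm_mul]
    have h1 : ‖k τ ^ (1/p)‖ ≤ lam ^ (1/p) := by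
      rw [Real.norm_of_nonneg (rpow_nonneg (hkpos τ).le _)]
      exact rpow_le_rpow (hkpos τ).le (hkle τ hτ.2) (one_div_nonneg.mpr hp0.le)
    exact mul_le_mul h1 (hC τ ⟨hτ.1.le, hτ.2⟩) (norm_nonneg _) (rpow_nonneg hlam.le _)
  have hψbd : ∀ᵐ τ ∂μ, ‖ψ τ‖ ≤ lam ^ (1/q) + 1 := by
    filter_upwards [ae_restrict_mem measurableSet_Ioc] with τ hτ
    rw [hψ, Real.norm_of_nonneg (rpow_nonneg (hkpos τ).le _)]
    have := rpow_le_rpow (hkpos τ).le (hkle τ hτ.2) (one_div_nonneg.mpr hq0.le)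
    linarith
  have hφLp : MemLp φ (ENNReal.ofReal p) μ := MemLp.of_bound hφm _ hφbd
  have hψLq : MemLp ψ (ENNReal.ofReal q) μ := MemLp.of_bound hψm _ hψbd
  have hφnn : 0 ≤ᵐ[μ] φ := ae_of_all _ fun τ =>
    mul_nonneg (rpow_nonneg (hkpos τ).le _) (hfnn τ)
  have hψnn : 0 ≤ᵐ[μ] ψ := ae_of_all _ fun τ => rpow_nonneg (hkpos τ).le _
  have holder := integral_mul_le_Lp_mul_Lq_of_nonneg hpq hφnn hψnn hφLp hψLq
  have hφψ : ∀ τ, φ τ * ψ τ = k τ * f τ := by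
    intro τ
    rw [hφ, hψ]
    rw [show k τ ^ (1/p) * f τ * k τ ^ (1/q) = k τ ^ (1/p) * k τ ^ (1/q) * f τ by ring,
      ← rpow_add (hkpos τ), show 1/p + 1/q = 1 by rw [one_div, one_div]; exact hpq.inv_add_inv_eq_one, rpow_one]
  have hφp : ∀ τ, φ τ ^ p = k τ * f τ ^ p := by
    intro τ
    rw [hφ, Real.mul_rpow (rpow_nonneg (hkpos τ).le _) (hfnn τ), ← Real.rpow_mul (hkpos τ).le,
      one_div_mul_cancel hp0.ne', rpow_one]
  have hψq : ∀ τ, ψ τ ^ q = k τ := by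
    intro τ
    rw [hψ, ← Real.rpow_mul (hkpos τ).le, one_div_mul_cancel hq0.ne', rpow_one]
  simp only [hφψ, hφp, hψq] at holder
  have h2 : (∫ τ, k τ ∂μ) ^ (1/q) ≤ 1 :=
    Real.rpow_le_one hmass0 hmass1 (one_div_nonneg.mpr hq0.le)
  have h3 : ∫ τ, k τ * f τ ∂μ ≤ (∫ τ, k τ * f τ ^ p ∂μ) ^ (1/p) := by
    calc ∫ τ, k τ * f τ ∂μ ≤ (∫ τ, k τ * f τ ^ p ∂μ) ^ (1/p) * (∫ τ, k τ ∂μ) ^ (1/q) := holder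
      _ ≤ (∫ τ, k τ * f τ ^ p ∂μ) ^ (1/p) * 1 := by
          exact mul_le_mul_of_nonneg_left h2 (rpow_nonneg hRHS0 _)
      _ = (∫ τ, k τ * f τ ^ p ∂μ) ^ (1/p) := mul_one _
  have hLHS0 : 0 ≤ ∫ τ, k τ * f τ ∂μ :=
    setIntegral_nonneg measurableSet_Ioc fun τ _ => mul_nonneg (hkpos τ).le (hfnn τ)
  calc (∫ τ in Set.Ioc 0 t, lam * exp (lam * (τ - t)) * f τ) ^ p
      = (∫ τ, k τ * f τ ∂μ) ^ p := rfl
    _ ≤ ((∫ τ, k τ * f τ ^ p ∂μ) ^ (1/p)) ^ p := Real.rpow_le_rpow hLHS0 h3 hp0.le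
    _ = ∫ τ, k τ * f τ ^ p ∂μ := by
        rw [← Real.rpow_mul hRHS0, one_div_mul_cancel hp0.ne', rpow_one]
    _ = ∫ τ in Set.Ioc 0 t, lam * exp (lam * (τ - t)) * f τ ^ p := rfl


lemma rep_formula (lam T : ℝ) (hlam : 0 < lam) (v v' w : ℝ → ℝ)
    (hvc : ContinuousOn v (Set.Icc 0 T))
    (hv'int : IntegrableOn v' (Set.Ioc 0 T))
    (hAC : ∀ t ∈ Set.Icc (0:ℝ) T, v t = ∫ τ in (0:ℝ)..t, v' τ)
    (hode : ∀ᵐ t ∂(volume.restrict (Set.Ioc (0:ℝ) T)), v' t + lam * v t = lam * w t)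
    (t : ℝ) (ht : t ∈ Set.Icc (0:ℝ) T) :
    v t = ∫ τ in Set.Ioc 0 t, lam * exp (lam * (τ - t)) * w τ := by
  obtain ⟨ht0, htT⟩ := ht
  have hsub : Set.Ioc (0:ℝ) t ⊆ Set.Ioc 0 T := Set.Ioc_subset_Ioc_right htT
  have hIccsub : Set.Icc (0:ℝ) t ⊆ Set.Icc 0 T := Set.Icc_subset_Icc_right htT
  have hv't : IntegrableOn v' (Set.Ioc 0 t) := hv'int.mono_set hsub
  have hvx : ∀ x ∈ Set.Icc (0:ℝ) t, v x = ∫ τ in Set.Ioc 0 x, v' τ := fun x hx => by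
    rw [hAC x (hIccsub hx), integral_of_le hx.1]
  have hexp_v' : IntegrableOn (fun y => exp (lam * y) * v' y) (Set.Ioc 0 t) := by
    refine Integrable.mono' (hv't.norm.const_mul (exp (lam * t)))
      ((Real.continuous_exp.comp
        (continuous_const.mul continuous_id)).aestronglyMeasurable.mul hv't.1) ?_
    filter_upwards [ae_restrict_mem measurableSet_Ioc] with y hy
    rw [norm_mul, Real.norm_of_nonneg (exp_pos _).le]
    exact mul_le_mul_of_nonneg_right
      (exp_le_exp.mpr (mul_le_mul_of_nonneg_left hy.2 hlam.le)) (norm_nonneg _)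
  have hexp_v : IntegrableOn (fun y => lam * exp (lam * y) * v y) (Set.Ioc 0 t) := by
    refine IntegrableOn.mono_set ?_ Set.Ioc_subset_Icc_self
    exact (((continuous_const.mul (Real.continuous_exp.comp
      (continuous_const.mul continuous_id))).continuousOn.mul
      (hvc.mono hIccsub)).integrableOn_Icc)
  have hfub := fubini_triangle t ht0 (fun x => lam * exp (lam * x)) v'
    (continuous_const.mul (Real.continuous_exp.comp (continuous_const.mul continuous_id))) hv't
  have hL : ∫ x in Set.Ioc 0 t, lam * exp (lam * x) * ∫ y in Set.Ioc 0 x, v' y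
      = ∫ x in Set.Ioc 0 t, lam * exp (lam * x) * v x :=
    setIntegral_congr_fun measurableSet_Ioc fun x hx => by
      rw [← hvx x ⟨hx.1.le, hx.2⟩]
  have hIcc : ∀ y ∈ Set.Ioc (0:ℝ) t,
      (∫ x in Set.Icc y t, lam * exp (lam * x)) = exp (lam * t) - exp (lam * y) := by
    intro y hy
    rw [integral_Icc_eq_integral_Ioc, ← integral_of_le hy.2]
    have h := expint lam 0 y t
    simpa using h
  have hR : ∫ y in Set.Ioc 0 t, (∫ x in Set.Icc y t, lam * exp (lam * x)) * v' y
      = ∫ y in Set.Ioc 0 t, (exp (lam * t) - exp (lam * y)) * v' y :=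
    setIntegral_congr_fun measurableSet_Ioc fun y hy => by rw [hIcc y hy]
  have hsplit : ∫ y in Set.Ioc 0 t, (exp (lam * t) - exp (lam * y)) * v' y
      = exp (lam * t) * v t - ∫ y in Set.Ioc 0 t, exp (lam * y) * v' y := by
    rw [hvx t ⟨ht0, le_refl t⟩, ← MeasureTheory.integral_const_mul,
      ← integral_sub (hv't.const_mul (exp (lam * t))) hexp_v']
    exact setIntegral_congr_fun measurableSet_Ioc fun y _ => by ring
  have hkey : ∫ x in Set.Ioc 0 t, lam * exp (lam * x) * v x
      = exp (lam * t) * v t - ∫ y in Set.Ioc 0 t, exp (lam * y) * v' y := by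
    rw [← hL, hfub, hR, hsplit]
  have hode_t : ∀ᵐ τ ∂(volume.restrict (Set.Ioc (0:ℝ) t)), v' τ + lam * v τ = lam * w τ :=
    ae_restrict_of_ae_restrict_of_subset hsub hode
  have hcong : ∫ τ in Set.Ioc 0 t, lam * exp (lam * τ) * w τ
      = ∫ τ in Set.Ioc 0 t, exp (lam * τ) * (v' τ + lam * v τ) := by
    refine integral_congr_ae ?_
    filter_upwards [hode_t] with τ hτ
    rw [hτ]; ring
  have hsplit2 : ∫ τ in Set.Ioc 0 t, exp (lam * τ) * (v' τ + lam * v τ)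
      = (∫ τ in Set.Ioc 0 t, exp (lam * τ) * v' τ)
        + ∫ τ in Set.Ioc 0 t, lam * exp (lam * τ) * v τ := by
    rw [← integral_add hexp_v' hexp_v]
    exact setIntegral_congr_fun measurableSet_Ioc fun τ _ => by ring
  have hmain : ∫ τ in Set.Ioc 0 t, lam * exp (lam * τ) * w τ = exp (lam * t) * v t := by
    rw [hcong, hsplit2, hkey]; ring
  calc v t = exp (-(lam * t)) * (exp (lam * t) * v t) := by
        rw [← mul_assoc, ← exp_add, neg_add_cancel, exp_zero, one_mul]
    _ = exp (-(lam * t)) * ∫ τ in Set.Ioc 0 t, lam * exp (lam * τ) * w τ := by rw [hmain]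
    _ = ∫ τ in Set.Ioc 0 t, lam * exp (lam * (τ - t)) * w τ := by
        rw [← MeasureTheory.integral_const_mul]
        refine setIntegral_congr_fun measurableSet_Ioc fun τ _ => ?_
        rw [show lam * (τ - t) = lam * τ + -(lam * t) by ring, exp_add]; ring

theorem energy_estimate_perturbed_ode (lam p T : ℝ) (hlam : 0 < lam) (hp : 1 ≤ p)
    (hT : 0 < T) (v v' w : ℝ → ℝ)
    (hvc : ContinuousOn v (Set.Icc 0 T)) (hwc : ContinuousOn w (Set.Icc 0 T))
    (hv'int : IntegrableOn v' (Set.Ioc 0 T))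
    (hAC : ∀ t ∈ Set.Icc (0:ℝ) T, v t = ∫ τ in (0:ℝ)..t, v' τ)
    (hode : ∀ᵐ t ∂(volume.restrict (Set.Ioc (0:ℝ) T)), v' t + lam * v t = lam * w t) :
    (∀ t ∈ Set.Icc (0:ℝ) T,
      |v t| ^ p + lam * ∫ τ in (0:ℝ)..t, |v τ| ^ p ≤ lam * ∫ τ in (0:ℝ)..t, |w τ| ^ p) ∧
    (∀ t ∈ Set.Icc (0:ℝ) T,
      |v t| ≤ lam ^ (1/p) * (∫ τ in (0:ℝ)..T, |w τ| ^ p) ^ (1/p)) ∧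
    (∫ τ in (0:ℝ)..T, |v τ| ^ p) ^ (1/p) ≤ (∫ τ in (0:ℝ)..T, |w τ| ^ p) ^ (1/p) := by
  have hp0 : (0:ℝ) < p := lt_of_lt_of_le one_pos hp
  -- pointwise Jensen bound
  have hJ : ∀ t ∈ Set.Icc (0:ℝ) T,
      |v t| ^ p ≤ ∫ τ in Set.Ioc 0 t, lam * exp (lam * (τ - t)) * |w τ| ^ p := by
    intro t ht
    have hIccsub : Set.Icc (0:ℝ) t ⊆ Set.Icc 0 T := Set.Icc_subset_Icc_right ht.2
    have hrep := rep_formula lam T hlam v v' w hvc hv'int hAC hode t ht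
    have habs : |v t| ≤ ∫ τ in Set.Ioc 0 t, lam * exp (lam * (τ - t)) * |w τ| := by
      rw [hrep]
      calc |∫ τ in Set.Ioc 0 t, lam * exp (lam * (τ - t)) * w τ|
          ≤ ∫ τ in Set.Ioc 0 t, ‖lam * exp (lam * (τ - t)) * w τ‖ := by
            rw [← Real.norm_eq_abs]
            exact MeasureTheory.norm_integral_le_integral_norm _
        _ = ∫ τ in Set.Ioc 0 t, lam * exp (lam * (τ - t)) * |w τ| :=
            setIntegral_congr_fun measurableSet_Ioc fun τ _ => by
              rw [Real.norm_eq_abs, abs_mul, abs_of_pos (mul_pos hlam (exp_pos _))]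
    calc |v t| ^ p ≤ (∫ τ in Set.Ioc 0 t, lam * exp (lam * (τ - t)) * |w τ|) ^ p :=
          Real.rpow_le_rpow (abs_nonneg _) habs hp0.le
      _ ≤ ∫ τ in Set.Ioc 0 t, lam * exp (lam * (τ - t)) * |w τ| ^ p :=
          jensen_step lam p t hlam hp ht.1 (fun x => |w x|)
            ((hwc.mono hIccsub).abs) (fun x => abs_nonneg _)
  -- integrability facts
  have hwp_cont : ContinuousOn (fun τ => |w τ| ^ p) (Set.Icc 0 T) :=
    (hwc.abs).rpow_const fun x _ => Or.inr hp0.le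
  have hvp_cont : ContinuousOn (fun τ => |v τ| ^ p) (Set.Icc 0 T) :=
    (hvc.abs).rpow_const fun x _ => Or.inr hp0.le
  have hwp_int : ∀ t ∈ Set.Icc (0:ℝ) T, IntegrableOn (fun τ => |w τ| ^ p) (Set.Ioc 0 t) :=
    fun t ht => (((hwp_cont.mono (Set.Icc_subset_Icc_right ht.2)).integrableOn_Icc).mono_set
      Set.Ioc_subset_Icc_self)
  have hvp_int : ∀ t ∈ Set.Icc (0:ℝ) T, IntegrableOn (fun τ => |v τ| ^ p) (Set.Ioc 0 t) :=
    fun t ht => (((hvp_cont.mono (Set.Icc_subset_Icc_right ht.2)).integrableOn_Icc).mono_set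
      Set.Ioc_subset_Icc_self)
  -- part A
  have hA : ∀ t ∈ Set.Icc (0:ℝ) T,
      |v t| ^ p + lam * ∫ τ in Set.Ioc 0 t, |v τ| ^ p
        ≤ lam * ∫ τ in Set.Ioc 0 t, |w τ| ^ p := by
    intro t ht
    have hkc : Continuous fun τ : ℝ => lam * exp (lam * (τ - t)) :=
      continuous_const.mul (Real.continuous_exp.comp
        (continuous_const.mul (continuous_id.sub continuous_const)))
    have hec : Continuous fun s : ℝ => exp (lam * s) :=
      Real.continuous_exp.comp (continuous_const.mul continuous_id)
    have h1ec : Continuous fun τ : ℝ => 1 - exp (lam * (τ - t)) :=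
      continuous_const.sub (Real.continuous_exp.comp
        (continuous_const.mul (continuous_id.sub continuous_const)))
    set g : ℝ → ℝ := fun s => exp (lam * s) * |w s| ^ p with hg
    set A : ℝ → ℝ := fun x => lam * exp (-(lam * x)) with hAdef
    have hAcont : Continuous A :=
      continuous_const.mul (Real.continuous_exp.comp (continuous_const.mul continuous_id).neg)
    have hgcont : ContinuousOn g (Set.Icc 0 t) :=
      hec.continuousOn.mul (hwp_cont.mono (Set.Icc_subset_Icc_right ht.2))
    have hgint_Icc : IntegrableOn g (Set.Icc 0 t) := hgcont.integrableOn_Icc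
    have hgint : IntegrableOn g (Set.Ioc 0 t) := hgint_Icc.mono_set Set.Ioc_subset_Icc_self
    -- rewrite the Jensen RHS at each τ
    have hGτ : ∀ τ ∈ Set.Ioc (0:ℝ) t,
        (∫ s in Set.Ioc 0 τ, lam * exp (lam * (s - τ)) * |w s| ^ p)
          = A τ * ∫ s in Set.Ioc 0 τ, g s := by
      intro τ _
      rw [← MeasureTheory.integral_const_mul]
      refine setIntegral_congr_fun measurableSet_Ioc fun s _ => ?_
      simp only [hg, hAdef]
      rw [show lam * (s - τ) = lam * s + -(lam * τ) by ring, exp_add]; ring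
    have hmono : ∫ τ in Set.Ioc 0 t, |v τ| ^ p
        ≤ ∫ τ in Set.Ioc 0 t, A τ * ∫ s in Set.Ioc 0 τ, g s := by
      refine setIntegral_mono_on (hvp_int t ht) ?_ measurableSet_Ioc ?_
      · refine IntegrableOn.mono_set ?_ Set.Ioc_subset_Icc_self
        exact ((hAcont.continuousOn).mul (continuousOn_primitive hgint_Icc)).integrableOn_Icc
      · intro τ hτ
        rw [← hGτ τ hτ]
        exact hJ τ ⟨hτ.1.le, hτ.2.trans ht.2⟩
    have hfub := fubini_triangle t ht.1 A g hAcont hgint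
    have hIccA : ∀ y ∈ Set.Ioc (0:ℝ) t,
        (∫ x in Set.Icc y t, A x) = exp (-(lam * y)) - exp (-(lam * t)) := by
      intro y hy
      rw [integral_Icc_eq_integral_Ioc, ← integral_of_le hy.2]
      have h1 := expint (-lam) 0 y t
      have h2 : (fun x => A x) = fun x => -(-lam * exp (-lam * x + 0)) := by
        funext x; simp only [hAdef]; rw [neg_mul, add_zero]; ring
      rw [show (∫ x in y..t, A x) = ∫ x in y..t, -(-lam * exp (-lam * x + 0)) by rw [← h2],
        intervalIntegral.integral_neg, h1]
      simp only [neg_mul, add_zero]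
      ring
    have hfub2 : ∫ τ in Set.Ioc 0 t, A τ * ∫ s in Set.Ioc 0 τ, g s
        = ∫ τ in Set.Ioc 0 t, (1 - exp (lam * (τ - t))) * |w τ| ^ p := by
      rw [hfub]
      refine setIntegral_congr_fun measurableSet_Ioc fun y hy => ?_
      rw [hIccA y hy]
      simp only [hg]
      rw [sub_mul, sub_mul, ← mul_assoc, ← mul_assoc, ← exp_add, ← exp_add,
        show -(lam * y) + lam * y = 0 by ring, exp_zero,
        show -(lam * t) + lam * y = lam * (y - t) by ring]
    have hcomb : (∫ τ in Set.Ioc 0 t, lam * exp (lam * (τ - t)) * |w τ| ^ p)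
        + lam * ∫ τ in Set.Ioc 0 t, (1 - exp (lam * (τ - t))) * |w τ| ^ p
        = lam * ∫ τ in Set.Ioc 0 t, |w τ| ^ p := by
      have h1int : IntegrableOn (fun τ => lam * exp (lam * (τ - t)) * |w τ| ^ p)
          (Set.Ioc 0 t) := by
        refine IntegrableOn.mono_set ?_ Set.Ioc_subset_Icc_self
        exact (hkc.continuousOn.mul
          (hwp_cont.mono (Set.Icc_subset_Icc_right ht.2))).integrableOn_Icc
      have h3int : IntegrableOn (fun τ => (1 - exp (lam * (τ - t))) * |w τ| ^ p)
          (Set.Ioc 0 t) := by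
        refine IntegrableOn.mono_set ?_ Set.Ioc_subset_Icc_self
        exact (h1ec.continuousOn.mul
          (hwp_cont.mono (Set.Icc_subset_Icc_right ht.2))).integrableOn_Icc
      have h2int : IntegrableOn (fun τ => lam * ((1 - exp (lam * (τ - t))) * |w τ| ^ p))
          (Set.Ioc 0 t) := h3int.const_mul lam
      rw [← MeasureTheory.integral_const_mul, ← MeasureTheory.integral_const_mul,
        ← integral_add h1int h2int]
      exact setIntegral_congr_fun measurableSet_Ioc fun τ _ => by ring
    calc |v t| ^ p + lam * ∫ τ in Set.Ioc 0 t, |v τ| ^ p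
        ≤ (∫ τ in Set.Ioc 0 t, lam * exp (lam * (τ - t)) * |w τ| ^ p)
          + lam * ∫ τ in Set.Ioc 0 t, (1 - exp (lam * (τ - t))) * |w τ| ^ p := by
          refine add_le_add (hJ t ht) (mul_le_mul_of_nonneg_left ?_ hlam.le)
          exact hmono.trans (le_of_eq hfub2)
      _ = lam * ∫ τ in Set.Ioc 0 t, |w τ| ^ p := hcomb
  -- translate to interval integrals
  have hA' : ∀ t ∈ Set.Icc (0:ℝ) T,
      |v t| ^ p + lam * ∫ τ in (0:ℝ)..t, |v τ| ^ p ≤ lam * ∫ τ in (0:ℝ)..t, |w τ| ^ p := by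
    intro t ht
    rw [integral_of_le ht.1, integral_of_le ht.1]
    exact hA t ht
  refine ⟨hA', ?_, ?_⟩
  · -- part B
    intro t ht
    have h0 : 0 ≤ ∫ τ in Set.Ioc 0 t, |v τ| ^ p :=
      setIntegral_nonneg measurableSet_Ioc fun τ _ => rpow_nonneg (abs_nonneg _) p
    have hmonoW : ∫ τ in Set.Ioc 0 t, |w τ| ^ p ≤ ∫ τ in Set.Ioc 0 T, |w τ| ^ p := by
      refine setIntegral_mono_set (hwp_int T ⟨le_of_lt hT, le_refl T⟩) ?_ ?_
      · exact ae_of_all _ fun τ => rpow_nonneg (abs_nonneg _) p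
      · exact HasSubset.Subset.eventuallyLE (Set.Ioc_subset_Ioc_right ht.2)
    have h1 : |v t| ^ p ≤ lam * ∫ τ in Set.Ioc 0 T, |w τ| ^ p := by
      have := hA t ht
      nlinarith [mul_le_mul_of_nonneg_left hmonoW hlam.le, mul_nonneg hlam.le h0]
    have hWnn : 0 ≤ ∫ τ in Set.Ioc 0 T, |w τ| ^ p :=
      setIntegral_nonneg measurableSet_Ioc fun τ _ => rpow_nonneg (abs_nonneg _) p
    have h2 := Real.rpow_le_rpow (rpow_nonneg (abs_nonneg _) p) h1
      (one_div_nonneg.mpr hp0.le)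
    rw [← Real.rpow_mul (abs_nonneg _), mul_one_div_cancel hp0.ne', rpow_one,
      Real.mul_rpow hlam.le hWnn] at h2
    rw [integral_of_le hT.le]
    exact h2
  · -- part C
    have hAT := hA T ⟨le_of_lt hT, le_refl T⟩
    have hvTnn : 0 ≤ |v T| ^ p := rpow_nonneg (abs_nonneg _) p
    have h1 : ∫ τ in Set.Ioc 0 T, |v τ| ^ p ≤ ∫ τ in Set.Ioc 0 T, |w τ| ^ p := by
      have h2 : lam * ∫ τ in Set.Ioc 0 T, |v τ| ^ p ≤ lam * ∫ τ in Set.Ioc 0 T, |w τ| ^ p := by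
        linarith
      exact le_of_mul_le_mul_left h2 hlam
    rw [integral_of_le hT.le, integral_of_le hT.le]
    exact Real.rpow_le_rpow (setIntegral_nonneg measurableSet_Ioc fun τ _ =>
      rpow_nonneg (abs_nonneg _) p) h1 (one_div_nonneg.mpr hp0.le)
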